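/- Over F_4, for k ≥ 1, σ**(x^{2k}) splits (is a product of linear factors) if and only if 2k ∈ {2,4,6}. -/

import Mathlib

open Polynomial

variable {F : Type*} [Field F]

/-- `D` is a (monic) unitary divisor of `S`: `D ∣ S` and `gcd(D, S/D) = 1`. -/
def IsUnitaryDivisor (D S : Polynomial F) : Prop :=
  D.Monic ∧ D ∣ S ∧ IsCoprime D (S / D)

/-- `D` is a (monic) bi-unitary divisor of `S`: `gcd_u(D, S/D) = 1`, i.e. the only common
monic unitary divisor of `D` and `S/D` is `1`. -/
def IsBiunitaryDivisor (D S : Polynomial F) : Prop :=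
  D.Monic ∧ D ∣ S ∧
    ∀ G : Polynomial F, IsUnitaryDivisor G D → IsUnitaryDivisor G (S / D) → G = 1

/-- `σ(S)`: the sum of all monic divisors of `S`. -/
noncomputable def sigma' (S : Polynomial F) : Polynomial F :=
  ∑ᶠ D ∈ {D : Polynomial F | D.Monic ∧ D ∣ S}, D

/-- `σ**(S)`: the sum of all monic bi-unitary divisors of `S`. -/
noncomputable def sigmaStarStar (S : Polynomial F) : Polynomial F :=
  ∑ᶠ D ∈ {D : Polynomial F | IsBiunitaryDivisor D S}, D

/-- `S` is bi-unitary perfect: `σ**(S) = S`. -/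
def IsBUP (S : Polynomial F) : Prop := sigmaStarStar S = S

/-- The field with four elements. -/
abbrev F4 := GaloisField 2 2



lemma monic_dvd_X_pow {n : ℕ} {D : Polynomial F} (h : D.Monic) (hd : D ∣ X ^ n) :
    ∃ i ≤ n, D = X ^ i := by
  obtain ⟨i, hi, ha⟩ := (dvd_prime_pow Polynomial.prime_X n).mp hd
  exact ⟨i, hi, eq_of_monic_of_associated h (monic_X_pow i) ha⟩

lemma X_pow_div {n i : ℕ} (h : i ≤ n) : (X ^ n : Polynomial F) / X ^ i = X ^ (n - i) := by
  have : (X ^ n : Polynomial F) = X ^ i * X ^ (n - i) := by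
    rw [← pow_add, Nat.add_sub_cancel' h]
  rw [this, mul_div_cancel_left₀ _ (pow_ne_zero _ X_ne_zero)]


lemma X_pow_inj {i j : ℕ} (h : (X ^ i : Polynomial F) = X ^ j) : i = j := by
  have := congrArg natDegree h
  simpa using this

lemma unitary_X_pow {i : ℕ} {G : Polynomial F} :
    IsUnitaryDivisor G (X ^ i) ↔ G = 1 ∨ G = X ^ i := by
  constructor
  · rintro ⟨hm, hd, hc⟩
    obtain ⟨j, hj, rfl⟩ := monic_dvd_X_pow hm hd
    rcases Nat.eq_zero_or_pos j with rfl | hj0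
    · left; simp
    rcases eq_or_lt_of_le hj with rfl | hji
    · right; rfl
    · exfalso
      rw [X_pow_div hj] at hc
      have hx : IsUnit (X : Polynomial F) :=
        hc.isUnit_of_dvd' (dvd_pow_self _ hj0.ne') (dvd_pow_self _ (by omega))
      exact Polynomial.not_isUnit_X hx
  · rintro (rfl | rfl)
    · exact ⟨monic_one, one_dvd _, isCoprime_one_left⟩
    · refine ⟨monic_X_pow i, dvd_rfl, ?_⟩
      rw [X_pow_div le_rfl, Nat.sub_self, pow_zero]
      exact isCoprime_one_right

lemma biunitary_X_pow {k : ℕ} (hk : 1 ≤ k) {D : Polynomial F} :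
    IsBiunitaryDivisor D (X ^ (2 * k)) ↔ ∃ i, i ≤ 2 * k ∧ i ≠ k ∧ D = X ^ i := by
  constructor
  · rintro ⟨hm, hd, hG⟩
    obtain ⟨i, hi, rfl⟩ := monic_dvd_X_pow hm hd
    refine ⟨i, hi, ?_, rfl⟩
    rintro rfl
    have h1 : IsUnitaryDivisor (X ^ i : Polynomial F) (X ^ i) :=
      unitary_X_pow.mpr (Or.inr rfl)
    have h2 : IsUnitaryDivisor (X ^ i : Polynomial F) (X ^ (2 * i) / X ^ i) := by
      rw [X_pow_div (by omega), show 2 * i - i = i by omega]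
      exact h1
    have := hG _ h1 h2
    have : (X ^ i : Polynomial F).natDegree = 0 := by rw [this]; simp
    simp [natDegree_X_pow] at this
    omega
  · rintro ⟨i, hi, hik, rfl⟩
    refine ⟨monic_X_pow i, pow_dvd_pow _ hi, ?_⟩
    intro G hG1 hG2
    rw [X_pow_div hi] at hG2
    rcases unitary_X_pow.mp hG1 with rfl | rfl
    · rfl
    rcases unitary_X_pow.mp hG2 with h | h
    · exact h
    · have := X_pow_inj h
      omega

open scoped Classical in
lemma sigmaStarStar_X_pow {k : ℕ} (hk : 1 ≤ k) :
    sigmaStarStar (X ^ (2 * k) : Polynomial F) =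
      ∑ i ∈ (Finset.range (2 * k + 1)).erase k, (X : Polynomial F) ^ i := by
  have hset : {D : Polynomial F | IsBiunitaryDivisor D (X ^ (2 * k))} =
      ↑(((Finset.range (2 * k + 1)).erase k).image (fun i => (X : Polynomial F) ^ i)) := by
    ext D
    simp only [Set.mem_setOf_eq, Finset.coe_image, Set.mem_image, Finset.mem_coe,
      Finset.mem_erase, Finset.mem_range, biunitary_X_pow hk]
    constructor
    · rintro ⟨i, hi, hik, rfl⟩; exact ⟨i, ⟨hik, by omega⟩, rfl⟩
    · rintro ⟨i, ⟨hik, hi⟩, rfl⟩; exact ⟨i, by omega, hik, rfl⟩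
  rw [sigmaStarStar, hset, finsum_mem_coe_finset, Finset.sum_image]
  intro a _ b _ h
  exact X_pow_inj h

lemma two_eq_zero : (2 : Polynomial F4) = 0 := by
  have : (2 : F4) = 0 := by
    have := CharP.cast_eq_zero F4 2
    exact_mod_cast this
  have h2 : (2 : Polynomial F4) = C (2 : F4) := by
    rw [map_ofNat]
  rw [h2, this, map_zero]

lemma key_identity (k : ℕ) (hk : 1 ≤ k) :
    (X - 1) * (∑ i ∈ (Finset.range (2 * k + 1)).erase k, (X : Polynomial F4) ^ i) =
      (X ^ k - 1) * (X ^ (k + 1) - 1) := by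
  rw [Finset.sum_erase_eq_sub (by simp; omega)]
  have hg : ((X : Polynomial F4) - 1) * ∑ i ∈ Finset.range (2 * k + 1), (X : Polynomial F4) ^ i
      = X ^ (2 * k + 1) - 1 := by
    have h := geom_sum_mul (X : Polynomial F4) (2 * k + 1)
    linear_combination h
  linear_combination hg + ((X : Polynomial F4) ^ k - 1) * two_eq_zero

lemma F4_card : Nat.card F4 = 4 := by
  have := GaloisField.card 2 2 (by norm_num)
  simpa using this

lemma splits_X4_sub_X : ((X : Polynomial F4) ^ 4 - X).Splits := by
  have : Fintype F4 := Fintype.ofFinite F4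
  have hcard : Fintype.card F4 = 4 := by
    rw [← Nat.card_eq_fintype_card, F4_card]
  have h := (FiniteField.isSplittingField_sub F4 F4).splits'
  rw [Algebra.algebraMap_self, map_id, hcard] at h
  exact h

lemma splits_X_pow_sub_one_small {m : ℕ} (hm : m ≤ 4) :
    ((X : Polynomial F4) ^ m - 1).Splits := by
  interval_cases m
  · simp
  · simpa using (Splits.X_sub_C (1 : F4))
  · have h : ((X : Polynomial F4) ^ 2 - 1) = (X - 1) ^ 2 := by
      linear_combination ((X : Polynomial F4) - 1) * two_eq_zero
    rw [h]
    exact Splits.pow (by simpa using (Splits.X_sub_C (1 : F4))) 2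
  · have hne : ((X : Polynomial F4) ^ 4 - X) ≠ 0 := by
      intro h
      have := congrArg (fun p => Polynomial.coeff p 4) h
      simp [coeff_X] at this
    exact Splits.of_dvd splits_X4_sub_X hne ⟨X, by ring⟩
  · have h : ((X : Polynomial F4) ^ 4 - 1) = (X - 1) ^ 4 := by
      linear_combination ((2:Polynomial F4) * X ^ 3 - 3 * X ^ 2 + 2 * X - 1) * two_eq_zero
    rw [h]
    exact Splits.pow (by simpa using (Splits.X_sub_C (1 : F4))) 4

lemma not_splits_X_pow_sub_one {m : ℕ} (hodd : Odd m) (hm : 5 ≤ m) :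
    ¬ ((X : Polynomial F4) ^ m - 1).Splits := by
  intro hs
  have : Fintype F4 := Fintype.ofFinite F4
  have hcard : Fintype.card F4 = 4 := by rw [← Nat.card_eq_fintype_card, F4_card]
  have hmcast : ((m : F4)) ≠ 0 := by
    rw [Ne, CharP.cast_eq_zero_iff F4 2 m]
    intro h
    have h1 := Nat.odd_iff.mp hodd
    omega
  have hsep : ((X : Polynomial F4) ^ m - 1).Separable := by
    have := Polynomial.separable_X_pow_sub_C (1 : F4) hmcast one_ne_zero
    simpa using this
  have hdeg : ((X : Polynomial F4) ^ m - 1).natDegree = m := by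
    have := Polynomial.natDegree_X_pow_sub_C (n := m) (r := (1 : F4))
    simpa using this
  have hroots := (Polynomial.splits_iff_card_roots.mp hs)
  rw [hdeg] at hroots
  have hnodup := Polynomial.nodup_roots hsep
  classical
  have hle : ((X : Polynomial F4) ^ m - 1).roots ≤ Finset.univ.val := by
    rw [Multiset.le_iff_count]
    intro a
    rcases Nat.eq_zero_or_pos (Multiset.count a ((X ^ m - 1 : Polynomial F4)).roots) with h0 | h0
    · simp [h0]
    · have h1 : Multiset.count a ((X ^ m - 1 : Polynomial F4)).roots ≤ 1 :=
        (Multiset.nodup_iff_count_le_one.mp hnodup) a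
      have h2 : Multiset.count a (Finset.univ.val : Multiset F4) = 1 :=
        Multiset.count_eq_one_of_mem Finset.univ.nodup (Finset.mem_univ a)
      omega
  have hcc := Multiset.card_le_card hle
  rw [hroots] at hcc
  have : Multiset.card (Finset.univ.val : Multiset F4) = Fintype.card F4 := rfl
  omega

lemma X_pow_sub_one_ne_zero {m : ℕ} (hm : 1 ≤ m) : ((X : Polynomial F4) ^ m - 1) ≠ 0 := by
  intro h
  have hdeg : ((X : Polynomial F4) ^ m - 1).natDegree = m := by
    have := Polynomial.natDegree_X_pow_sub_C (n := m) (r := (1 : F4))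
    simpa using this
  rw [h] at hdeg
  simp at hdeg
  omega

theorem stmt6 (k : ℕ) (hk : 1 ≤ k) :
    (sigmaStarStar (X ^ (2 * k) : Polynomial F4)).Splits ↔
      2 * k ∈ ({2, 4, 6} : Set ℕ) := by
  rw [sigmaStarStar_X_pow hk]
  set S : Polynomial F4 := ∑ i ∈ (Finset.range (2 * k + 1)).erase k, (X : Polynomial F4) ^ i
    with hS
  have hkey := key_identity k hk
  have hX1 : ((X : Polynomial F4) - 1).Splits := by
    simpa using (Splits.X_sub_C (1 : F4))
  have hne : ((X : Polynomial F4) ^ k - 1) * ((X : Polynomial F4) ^ (k + 1) - 1) ≠ 0 :=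
    mul_ne_zero (X_pow_sub_one_ne_zero hk) (X_pow_sub_one_ne_zero (by omega))
  have hmem : 2 * k ∈ ({2, 4, 6} : Set ℕ) ↔ k ≤ 3 := by
    simp only [Set.mem_insert_iff, Set.mem_singleton_iff]
    omega
  rw [hmem]
  constructor
  · intro hSpl
    have hprod : (((X : Polynomial F4) ^ k - 1) * ((X : Polynomial F4) ^ (k + 1) - 1)).Splits := by
      rw [← hkey]
      exact Splits.mul hX1 hSpl
    have h1 : ((X : Polynomial F4) ^ k - 1).Splits :=
      Splits.of_dvd hprod hne (Dvd.intro _ rfl)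
    have h2 : ((X : Polynomial F4) ^ (k + 1) - 1).Splits :=
      Splits.of_dvd hprod hne (Dvd.intro_left _ rfl)
    by_contra hk3
    rcases Nat.even_or_odd k with he | ho
    · exact not_splits_X_pow_sub_one (by simpa using he.add_one) (by omega) h2
    · exact not_splits_X_pow_sub_one ho (by have := Nat.odd_iff.mp ho; omega) h1
  · intro hk3
    have hprod : (((X : Polynomial F4) ^ k - 1) * ((X : Polynomial F4) ^ (k + 1) - 1)).Splits :=
      Splits.mul (splits_X_pow_sub_one_small (by omega)) (splits_X_pow_sub_one_small (by omega))
    exact Splits.of_dvd hprod hne ⟨X - 1, by rw [← hkey]; ring⟩
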